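/- Let d ≥ 2 and g be integers with 1 ≤ g ≤ d−1, and let q : Λ → [0, g] ∪ {q_0} be nonnegative reals indexed by a finite set Λ containing 0, with q_λ ≤ g for all λ ≠ 0, q_0 ≤ d, and ∑_λ q_λ = d. Then (∑_λ q_λ² − 1)/(d²−1) ≤ 1 − (2g(d−g)/(d(d²−1)))·(d − q_0). -/

import Mathlib

set_option maxHeartbeats 1600000 in
theorem stmt_18 {ι : Type*} [Fintype ι] [DecidableEq ι] (o : ι)
    (d g : ℕ) (hd : 2 ≤ d) (hg1 : 1 ≤ g) (hg2 : g ≤ d - 1)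
    (q : ι → ℝ) (hq0 : ∀ lam, 0 ≤ q lam)
    (hqg : ∀ lam, lam ≠ o → q lam ≤ g) (hq0d : q o ≤ d)
    (hsum : ∑ lam, q lam = d) :
    ((∑ lam, q lam ^ 2) - 1) / ((d : ℝ) ^ 2 - 1)
      ≤ 1 - (2 * g * ((d : ℝ) - g) / (d * ((d : ℝ) ^ 2 - 1))) * ((d : ℝ) - q o) := by
  have hd' : (2:ℝ) ≤ (d:ℝ) := by exact_mod_cast hd
  have hg1' : (1:ℝ) ≤ (g:ℝ) := by exact_mod_cast hg1
  have hgd : (g:ℝ) + 1 ≤ (d:ℝ) := by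
    have h : g + 1 ≤ d := by omega
    exact_mod_cast h
  have hd0 : (0:ℝ) < (d:ℝ) := by linarith
  have hD : (0:ℝ) < (d:ℝ)^2 - 1 := by nlinarith
  obtain ⟨i, -, hM⟩ := Finset.exists_max_image (Finset.univ : Finset ι) q
    ⟨o, Finset.mem_univ o⟩
  set M := q i with hMdef
  have hM' : ∀ j, q j ≤ M := fun j => hM j (Finset.mem_univ j)
  have hM0 : 0 ≤ M := hq0 i
  have hMd : M ≤ (d:ℝ) := by
    have h := Finset.single_le_sum (fun j (_ : j ∈ Finset.univ) => hq0 j)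
      (Finset.mem_univ i)
    rw [hsum] at h
    exact h
  have hsea := Finset.sum_erase_add Finset.univ q (Finset.mem_univ i)
  have herase : ∑ j ∈ Finset.univ.erase i, q j = (d:ℝ) - M := by
    rw [hsum] at hsea
    linarith
  have hje : ∀ j ∈ Finset.univ.erase i, q j ≤ (d:ℝ) - M := by
    intro j hj
    have h := Finset.single_le_sum (fun k (_ : k ∈ Finset.univ.erase i) => hq0 k) hj
    rw [herase] at h
    exact h
  have hsplit : ∑ lam, q lam * ((d:ℝ) - q lam)
      = M * ((d:ℝ) - M) + ∑ j ∈ Finset.univ.erase i, q j * ((d:ℝ) - q j) := by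
    have h := Finset.sum_erase_add Finset.univ (fun lam => q lam * ((d:ℝ) - q lam))
      (Finset.mem_univ i)
    rw [← h]
    ring
  have hqoo : 0 ≤ q o := hq0 o
  -- Key inequality
  have hKey : 2*(g:ℝ)*((d:ℝ)-(g:ℝ))*((d:ℝ) - q o)
      ≤ (d:ℝ) * ∑ lam, q lam * ((d:ℝ) - q lam) := by
    rcases le_or_gt (d:ℝ) (2*M) with hc | hc
    · -- case A : big maximum
      have hPA : 2*M*((d:ℝ)-M) ≤ ∑ lam, q lam * ((d:ℝ) - q lam) := by
        have h1 : ∑ j ∈ Finset.univ.erase i, q j * M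
            ≤ ∑ j ∈ Finset.univ.erase i, q j * ((d:ℝ) - q j) :=
          Finset.sum_le_sum (fun j hj =>
            mul_le_mul_of_nonneg_left (by linarith [hje j hj]) (hq0 j))
        have h2 : ∑ j ∈ Finset.univ.erase i, q j * M = ((d:ℝ) - M) * M := by
          rw [← Finset.sum_mul, herase]
        rw [hsplit]
        linarith
      rcases le_or_gt M (g:ℝ) with hMg | hMg
      · -- M ≤ g, so g(d-g) ≤ M(d-M) since d ≤ 2M ≤ M+g
        have h3 : (g:ℝ)*((d:ℝ)-g) ≤ M*((d:ℝ)-M) := by nlinarith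
        have h4 : (0:ℝ) ≤ 2*(g:ℝ)*((d:ℝ)-g) := by nlinarith
        have ha : 2*(g:ℝ)*((d:ℝ)-g)*((d:ℝ) - q o) ≤ 2*(g:ℝ)*((d:ℝ)-g)*(d:ℝ) :=
          mul_le_mul_of_nonneg_left (by linarith) h4
        have hb : (g:ℝ)*((d:ℝ)-g)*(d:ℝ) ≤ M*((d:ℝ)-M)*(d:ℝ) :=
          mul_le_mul_of_nonneg_right h3 (le_of_lt hd0)
        have hcc := mul_le_mul_of_nonneg_left hPA (le_of_lt hd0)
        nlinarith [ha, hb, hcc]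
      · -- g < M, then i = o
        have hio : i = o := by
          by_contra h
          have := hqg i h
          rw [← hMdef] at this
          linarith
        have hqo : q o = M := by rw [← hio]
        rw [hqo]
        have h5 : (g:ℝ)*((d:ℝ)-g) ≤ M*(d:ℝ) := by nlinarith
        have hb : (g:ℝ)*((d:ℝ)-g)*((d:ℝ)-M) ≤ M*(d:ℝ)*((d:ℝ)-M) :=
          mul_le_mul_of_nonneg_right h5 (by linarith)
        have hcc := mul_le_mul_of_nonneg_left hPA (le_of_lt hd0)
        nlinarith [hb, hcc]
    · -- case B : small maximum
      have hPB : (d:ℝ)*((d:ℝ)-M) ≤ ∑ lam, q lam * ((d:ℝ) - q lam) := by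
        have h1 : ∑ lam, q lam * ((d:ℝ) - M) ≤ ∑ lam, q lam * ((d:ℝ) - q lam) :=
          Finset.sum_le_sum (fun j _ =>
            mul_le_mul_of_nonneg_left (by linarith [hM' j]) (hq0 j))
        rw [← Finset.sum_mul, hsum] at h1
        linarith
      have h6 : 2*(g:ℝ)*((d:ℝ)-g) ≤ (d:ℝ)*((d:ℝ)-M) := by nlinarith [sq_nonneg ((d:ℝ) - 2*g)]
      have h4 : (0:ℝ) ≤ 2*(g:ℝ)*((d:ℝ)-g) := by nlinarith
      have ha : 2*(g:ℝ)*((d:ℝ)-g)*((d:ℝ) - q o) ≤ 2*(g:ℝ)*((d:ℝ)-g)*(d:ℝ) :=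
        mul_le_mul_of_nonneg_left (by linarith) h4
      have hb : 2*(g:ℝ)*((d:ℝ)-g)*(d:ℝ) ≤ (d:ℝ)*((d:ℝ)-M)*(d:ℝ) :=
        mul_le_mul_of_nonneg_right h6 (le_of_lt hd0)
      have hcc := mul_le_mul_of_nonneg_left hPB (le_of_lt hd0)
      nlinarith [ha, hb, hcc]
  -- conclude
  have hP'eq : ∑ lam, q lam * ((d:ℝ) - q lam) = (d:ℝ)^2 - ∑ lam, q lam^2 := by
    have h : ∑ lam, q lam * ((d:ℝ) - q lam)
        = (∑ lam, q lam) * (d:ℝ) - ∑ lam, q lam^2 := by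
      rw [Finset.sum_mul, ← Finset.sum_sub_distrib]
      exact Finset.sum_congr rfl (fun lam _ => by ring)
    rw [h, hsum]
    ring
  rw [hP'eq] at hKey
  rw [div_le_iff₀ hD]
  have hrw : (1 - 2 * (g:ℝ) * ((d:ℝ) - g) / ((d:ℝ) * ((d:ℝ)^2 - 1)) * ((d:ℝ) - q o))
      * ((d:ℝ)^2 - 1)
      = ((d:ℝ)^2 - 1) - (2*(g:ℝ)*((d:ℝ)-g)*((d:ℝ) - q o))/(d:ℝ) := by
    field_simp
  rw [hrw]
  have h7 : (2*(g:ℝ)*((d:ℝ)-g)*((d:ℝ) - q o))/(d:ℝ) ≤ (d:ℝ)^2 - ∑ lam, q lam^2 := by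
    rw [div_le_iff₀ hd0]
    linarith [hKey]
  linarith
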